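/- Let k and n be integers with 2 ≤ k ≤ n − 1 and kn even. Then there exists a k-regular simple graph of order n that contains a Hamiltonian cycle. -/

import Mathlib

/-- Eccentricity of a vertex in a (finite connected) simple graph:
the maximum distance from `v` to any vertex. -/
noncomputable def SimpleGraph.mecc {V : Type*} (G : SimpleGraph V) (v : V) : ℕ :=
  sSup (Set.range (G.dist v))

/-- Radius: the minimum eccentricity. -/
noncomputable def SimpleGraph.mrad {V : Type*} (G : SimpleGraph V) : ℕ :=
  sInf (Set.range G.mecc)

/-- Diameter: the maximum eccentricity. -/
noncomputable def SimpleGraph.mdiam {V : Type*} (G : SimpleGraph V) : ℕ :=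
  sSup (Set.range G.mecc)

/-- The center: the set of vertices of minimum eccentricity. -/
noncomputable def SimpleGraph.mcenter {V : Type*} (G : SimpleGraph V) : Set V :=
  {v | G.mecc v = G.mrad}

/-- The annulus: the set of vertices of intermediate eccentricity. -/
noncomputable def SimpleGraph.mannulus {V : Type*} (G : SimpleGraph V) : Set V :=
  {v | G.mrad < G.mecc v ∧ G.mecc v < G.mdiam}

/-- The periphery: the set of vertices of maximum eccentricity. -/
noncomputable def SimpleGraph.mperiphery {V : Type*} (G : SimpleGraph V) : Set V :=
  {v | G.mecc v = G.mdiam}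


section AuxHRG

open SimpleGraph

variable {n : ℕ} [NeZero n]

def hrgCircWalk (G : SimpleGraph (ZMod n))
    (h : ∀ j : ℕ, G.Adj ((j : ℕ) + 1 : ℕ) (j : ZMod n)) :
    (j : ℕ) → G.Walk (j : ZMod n) (0 : ZMod n)
  | 0 => SimpleGraph.Walk.nil.copy (by simp) rfl
  | (j+1) => SimpleGraph.Walk.cons (h j) (hrgCircWalk G h j)

lemma hrgCircWalk_support (G : SimpleGraph (ZMod n))
    (h : ∀ j : ℕ, G.Adj ((j : ℕ) + 1 : ℕ) (j : ZMod n)) :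
    ∀ j, (hrgCircWalk G h j).support
      = (List.range (j+1)).reverse.map (Nat.cast : ℕ → ZMod n)
  | 0 => by simp [hrgCircWalk, List.range_succ]
  | (j+1) => by
      rw [hrgCircWalk, SimpleGraph.Walk.support_cons, hrgCircWalk_support G h j]
      simp [List.range_succ]

lemma hrgCircWalk_edges (G : SimpleGraph (ZMod n))
    (h : ∀ j : ℕ, G.Adj ((j : ℕ) + 1 : ℕ) (j : ZMod n)) :
    ∀ j, ∀ e ∈ (hrgCircWalk G h j).edges,
      ∃ i < j, e = s(((i+1 : ℕ) : ZMod n), ((i : ℕ) : ZMod n))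
  | 0 => by simp [hrgCircWalk, List.range_succ]
  | (j+1) => by
      intro e he
      rw [hrgCircWalk, SimpleGraph.Walk.edges_cons] at he
      rcases List.mem_cons.mp he with rfl | he
      · exact ⟨j, by omega, rfl⟩
      · obtain ⟨i, hi, rfl⟩ := hrgCircWalk_edges G h j e he
        exact ⟨i, by omega, rfl⟩

end AuxHRG

lemma hrg_aux {n : ℕ} [NeZero n] (k : ℕ) (hk : 2 ≤ k) (hkn : k + 1 ≤ n) (he : Even (k * n)) :
    ∃ G : SimpleGraph (ZMod n), (∀ v, (G.neighborSet v).ncard = k) ∧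
      ∃ (v : ZMod n) (p : G.Walk v v), p.IsHamiltonianCycle := by
  have hn3 : 3 ≤ n := by omega
  have hpar : k % 2 = 1 → n % 2 = 0 := by
    intro hko
    rcases Nat.even_mul.mp he with h | h
    · exact absurd (Nat.even_iff.mp h) (by omega)
    · exact Nat.even_iff.mp h
  -- the set of allowed differences, as naturals
  set T : Finset ℕ :=
    Finset.Icc 1 (k/2) ∪ Finset.Icc (n - k/2) (n-1) ∪ (if Odd k then {n/2} else ∅) with hT
  have hmemT : ∀ j, j ∈ T ↔
      (1 ≤ j ∧ j ≤ k/2) ∨ (n - k/2 ≤ j ∧ j ≤ n-1) ∨ (k % 2 = 1 ∧ j = n/2) := by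
    intro j
    by_cases h : Odd k <;>
      simp [hT, h, Finset.mem_union, Finset.mem_Icc, Nat.odd_iff.mp, Nat.odd_iff] <;>
      rw [Nat.odd_iff] at h <;> tauto
  have hTlt : ∀ j ∈ T, j < n := by
    intro j hj; rw [hmemT] at hj; omega
  have hcardT : T.card = k := by
    have hd1 : Disjoint (Finset.Icc 1 (k/2)) (Finset.Icc (n - k/2) (n-1)) := by
      rw [Finset.disjoint_left]; intro j h1 h2
      rw [Finset.mem_Icc] at h1 h2; omega
    have hd2 : Disjoint (Finset.Icc 1 (k/2) ∪ Finset.Icc (n - k/2) (n-1))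
        (if Odd k then ({n/2} : Finset ℕ) else ∅) := by
      by_cases h : Odd k
      · rw [Nat.odd_iff] at h
        simp only [if_pos (Nat.odd_iff.mpr h), Finset.disjoint_left]
        intro j h1 h2
        rw [Finset.mem_union, Finset.mem_Icc, Finset.mem_Icc] at h1
        rw [Finset.mem_singleton] at h2
        omega
      · simp [h]
    rw [hT, Finset.card_union_of_disjoint hd2, Finset.card_union_of_disjoint hd1,
      Nat.card_Icc, Nat.card_Icc]
    by_cases h : Odd k
    · rw [if_pos h]; rw [Nat.odd_iff] at h; simp; omega
    · rw [if_neg h]; rw [Nat.not_odd_iff_even, Nat.even_iff] at h; simp; omega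
  set D : Finset (ZMod n) := T.image (Nat.cast : ℕ → ZMod n) with hDdef
  have hD : ∀ d : ZMod n, d ∈ D ↔ d.val ∈ T := by
    intro d
    simp only [hDdef, Finset.mem_image]
    constructor
    · rintro ⟨t, ht, rfl⟩; rwa [ZMod.val_cast_of_lt (hTlt t ht)]
    · intro h; exact ⟨d.val, h, ZMod.natCast_rightInverse d⟩
  have hcardD : D.card = k := by
    rw [hDdef, Finset.card_image_of_injOn, hcardT]
    intro x hx y hy hxy
    have := congrArg ZMod.val hxy
    rwa [ZMod.val_cast_of_lt (hTlt x hx), ZMod.val_cast_of_lt (hTlt y hy)] at this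
  have h0D : (0 : ZMod n) ∉ D := by
    rw [hD, ZMod.val_zero, hmemT]; omega
  have hnegD : ∀ d ∈ D, -d ∈ D := by
    intro d hd
    rw [hD] at hd ⊢
    have hd0 : d ≠ 0 := by
      intro h; rw [h, ZMod.val_zero, hmemT] at hd; omega
    rw [ZMod.neg_val, if_neg hd0]
    have hlt := ZMod.val_lt d
    have hvpos : 0 < d.val := by
      rcases Nat.eq_zero_or_pos d.val with h | h
      · exact absurd ((ZMod.val_eq_zero d).mp h) hd0
      · exact h
    rw [hmemT] at hd ⊢
    omega
  set G : SimpleGraph (ZMod n) :=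
    { Adj := fun v w => w - v ∈ D
      symm := by
        constructor
        intro v w h
        have := hnegD _ h
        rwa [neg_sub] at this
      loopless := by
        constructor
        intro v h
        simp only [sub_self] at h
        exact h0D h } with hG
  have hAdj : ∀ v w : ZMod n, G.Adj v w ↔ w - v ∈ D := fun _ _ => Iff.rfl
  refine ⟨G, ?_, ?_⟩
  · -- degrees
    intro v
    have hset : G.neighborSet v = ↑(D.image (fun d => v + d)) := by
      ext w
      simp only [SimpleGraph.mem_neighborSet, hAdj, Finset.coe_image, Set.mem_image,
        Finset.mem_coe]
      constructor
      · intro h; exact ⟨w - v, h, by ring⟩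
      · rintro ⟨d, hd, rfl⟩; simpa using hd
    rw [hset, Set.ncard_coe_finset,
      Finset.card_image_of_injective _ (add_right_injective v), hcardD]
  · -- Hamiltonian cycle
    have hm1eq : ((n-1 : ℕ) : ZMod n) = -1 := by
      rw [Nat.cast_sub (by omega : 1 ≤ n), ZMod.natCast_self, Nat.cast_one, zero_sub]
    have hm1D : (-1 : ZMod n) ∈ D := by
      rw [← hm1eq, hD, ZMod.val_cast_of_lt (by omega), hmemT]
      omega
    have hadj : ∀ j : ℕ, G.Adj ((j : ℕ) + 1 : ℕ) (j : ZMod n) := by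
      intro j
      rw [hAdj]
      have : (j : ZMod n) - ((j + 1 : ℕ) : ZMod n) = -1 := by push_cast; ring
      rw [this]; exact hm1D
    have hadjtop : G.Adj (0 : ZMod n) ((n-1 : ℕ) : ZMod n) := by
      rw [hAdj, sub_zero, hm1eq]; exact hm1D
    have hnodup : ((List.range n).reverse.map (Nat.cast : ℕ → ZMod n)).Nodup := by
      refine List.Nodup.map_on ?_ (List.nodup_reverse.mpr List.nodup_range)
      intro x hx y hy hxy
      rw [List.mem_reverse, List.mem_range] at hx hy
      have := congrArg ZMod.val hxy
      rwa [ZMod.val_cast_of_lt hx, ZMod.val_cast_of_lt hy] at this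
    refine ⟨0, SimpleGraph.Walk.cons hadjtop (hrgCircWalk G hadj (n-1)), ?_⟩
    rw [SimpleGraph.Walk.isHamiltonianCycle_iff_isCycle_and_support_count_tail_eq_one]
    constructor
    · rw [SimpleGraph.Walk.cons_isCycle_iff]
      constructor
      · rw [SimpleGraph.Walk.isPath_def, hrgCircWalk_support]
        have : n - 1 + 1 = n := by omega
        rw [this]; exact hnodup
      · intro hmem
        obtain ⟨i, hi, heq⟩ := hrgCircWalk_edges G hadj (n-1) _ hmem
        rw [Sym2.eq_iff] at heq
        rcases heq with ⟨h1, h2⟩ | ⟨h1, h2⟩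
        · have := congrArg ZMod.val h1
          rw [ZMod.val_zero, ZMod.val_cast_of_lt (by omega : i + 1 < n)] at this
          omega
        · have e1 := congrArg ZMod.val h1
          rw [ZMod.val_zero, ZMod.val_cast_of_lt (by omega : i < n)] at e1
          have e2 := congrArg ZMod.val h2
          rw [ZMod.val_cast_of_lt (by omega : n - 1 < n),
            ZMod.val_cast_of_lt (by omega : i + 1 < n)] at e2
          omega
    · intro a
      rw [SimpleGraph.Walk.support_cons, List.tail_cons, hrgCircWalk_support]
      have hn : n - 1 + 1 = n := by omega
      rw [hn]
      refine List.count_eq_one_of_mem hnodup ?_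
      rw [List.mem_map]
      exact ⟨a.val, by rw [List.mem_reverse, List.mem_range]; exact ZMod.val_lt a,
        ZMod.natCast_rightInverse a⟩

theorem exists_hamiltonian_regular_graph
    (k n : ℕ) (hk : 2 ≤ k) (hkn : k + 1 ≤ n) (he : Even (k * n)) :
    ∃ G : SimpleGraph (Fin n), (∀ v, (G.neighborSet v).ncard = k) ∧
      ∃ (v : Fin n) (p : G.Walk v v), p.IsHamiltonianCycle := by
  obtain ⟨m, rfl⟩ : ∃ m, n = m + 1 := ⟨n - 1, by omega⟩
  haveI : NeZero (m + 1) := ⟨Nat.succ_ne_zero m⟩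
  exact hrg_aux k hk hkn he
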